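/- Let n ≥ 1 and d : Fin n → ℕ with d j ≥ 1 for every j, set S = ∑ j, (d j − 1), and let x : Fin (S + 1) → ℂ be injective. For each l, define ψ_l ∈ EuclideanSpace ℂ ((j : Fin n) → Fin (d j)) by ψ_l i = (x l) ^ (∑ j, (i j : ℕ)); each ψ_l is fully product (ψ_l i = ∏ j, (x l)^{(i j : ℕ)}). Then the span of {ψ_l : l : Fin (S+1)} equals the span of the states {𝔊_n^k : 0 ≤ k ≤ S}. -/

import Mathlib

/-- The unnormalized multipartite state `𝔊_n^k`, the uniform superposition of all
basis vectors `|i₁⋯iₙ⟩` with `i₁ + ⋯ + iₙ = k`. -/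
noncomputable def gFrak (n : ℕ) (d : Fin n → ℕ) (k : ℕ) :
    EuclideanSpace ℂ ((j : Fin n) → Fin (d j)) :=
  WithLp.toLp 2 (fun (i : (j : Fin n) → Fin (d j)) => if (∑ j, ((i j : ℕ))) = k then 1 else 0)

/-- For injective `x : Fin (S+1) → ℂ`, where `S = ∑ j (d j − 1)`, the fully product
vectors `ψ_l i = (x l) ^ (∑ j, i j)` span the same subspace as the states `𝔊_n^k`,
`0 ≤ k ≤ S`. -/
theorem span_nUPB_eq_span_gFrak (n : ℕ) (hn : 1 ≤ n) (d : Fin n → ℕ)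
    (hd : ∀ j, 1 ≤ d j) (S : ℕ) (hS : S = ∑ j, (d j - 1))
    (x : Fin (S + 1) → ℂ) (hx : Function.Injective x)
    (ψ : Fin (S + 1) → EuclideanSpace ℂ ((j : Fin n) → Fin (d j)))
    (hψ : ∀ l i, ψ l i = (x l) ^ (∑ j, ((i j : ℕ)))) :
    (∀ l i, ψ l i = ∏ j, (x l) ^ ((i j : ℕ))) ∧
    Submodule.span ℂ (Set.range ψ) =
      Submodule.span ℂ {v | ∃ k ≤ S, v = gFrak n d k} := by
  have hle : ∀ i : (j : Fin n) → Fin (d j), (∑ j, ((i j : ℕ))) ≤ S := by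
    intro i
    rw [hS]
    exact Finset.sum_le_sum fun j _ => Nat.le_pred_of_lt (i j).isLt
  constructor
  · intro l i
    rw [hψ, Finset.prod_pow_eq_pow_sum]
  set g : Fin (S + 1) → EuclideanSpace ℂ ((j : Fin n) → Fin (d j)) :=
    fun k => gFrak n d (k : ℕ) with hg
  have hset : {v | ∃ k ≤ S, v = gFrak n d k} = Set.range g := by
    ext v
    constructor
    · rintro ⟨k, hk, rfl⟩
      exact ⟨⟨k, Nat.lt_succ_of_le hk⟩, rfl⟩
    · rintro ⟨k, rfl⟩
      exact ⟨(k : ℕ), Nat.lt_succ_iff.mp k.isLt, rfl⟩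
  rw [hset]
  set V := Matrix.vandermonde x with hV
  have hψg : ∀ l, ψ l = ∑ k, V l k • g k := by
    intro l
    ext i
    have hs : (∑ j, ((i j : ℕ))) < S + 1 := Nat.lt_succ_of_le (hle i)
    rw [hψ]
    have : (∑ k, V l k • g k) i = ∑ k, V l k * g k i := by
      rw [show (∑ k, V l k • g k) i = ∑ k, (V l k • g k) i from
        by rw [WithLp.ofLp_sum, Finset.sum_apply]]
      simp [PiLp.smul_apply, smul_eq_mul]
    rw [this]
    rw [Finset.sum_eq_single (⟨∑ j, ((i j : ℕ)), hs⟩ : Fin (S + 1))]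
    · simp [hg, gFrak, hV, Matrix.vandermonde]
    · intro b _ hb
      have : (∑ j, ((i j : ℕ))) ≠ (b : ℕ) := by
        intro h
        apply hb
        exact Fin.ext (by simp [← h])
      simp [hg, gFrak, this]
    · intro h
      exact absurd (Finset.mem_univ _) h
  have hdet : IsUnit V.det := by
    rw [isUnit_iff_ne_zero]
    exact Matrix.det_vandermonde_ne_zero_iff.mpr hx
  have hinv : V⁻¹ * V = 1 := Matrix.nonsing_inv_mul V hdet
  apply le_antisymm
  · rw [Submodule.span_le]
    rintro _ ⟨l, rfl⟩
    rw [hψg l]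
    exact Submodule.sum_mem _ fun k _ =>
      Submodule.smul_mem _ _ (Submodule.subset_span ⟨k, rfl⟩)
  · rw [Submodule.span_le]
    rintro _ ⟨k, rfl⟩
    have hgk : g k = ∑ l, V⁻¹ k l • ψ l := by
      simp_rw [hψg, Finset.smul_sum, smul_smul]
      rw [Finset.sum_comm]
      simp_rw [← Finset.sum_smul, ← Matrix.mul_apply, hinv]
      simp [Matrix.one_apply]
    rw [hgk]
    exact Submodule.sum_mem _ fun l _ =>
      Submodule.smul_mem _ _ (Submodule.subset_span ⟨l, rfl⟩)
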